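/- Let Φ : ℝ^n → ℝ^{m+1} be twice continuously differentiable, x̄ with Φ(x̄) = 0, x̄* ∈ ℝ^n, and λ̄ ∈ Λ(x̄,x̄*) := {λ ∈ −Q : ∇Φ(x̄)*λ = x̄*}. Then the following are equivalent: (i) Λ(x̄,x̄*) = {λ̄} and there exists ℓ > 0 such that dist(λ; Λ(x̄,x̄*)) ≤ ℓ·‖∇Φ(x̄)*λ − x̄*‖ for all λ ∈ −Q; (ii) (DN_Q)(0,λ̄)(0) ∩ ker ∇Φ(x̄)* = {0}, where DN_Q is the graphical derivative of the normal cone mapping to Q at (Φ(x̄),λ̄) = (0,λ̄). -/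

import Mathlib

open scoped RealInnerProductSpace Pointwise
open Filter Topology Metric Set Classical

noncomputable section

abbrev Em (m : ℕ) := WithLp 2 (ℝ × EuclideanSpace ℝ (Fin m))

namespace SOC

def mk2 {α β : Type*} (a : α) (b : β) : WithLp 2 (α × β) := (WithLp.equiv 2 (α × β)).symm (a, b)

def Q (m : ℕ) : Set (Em m) := {s | ‖s.ofLp.2‖ ≤ s.ofLp.1}

variable {H : Type*} [NormedAddCommGroup H] [InnerProductSpace ℝ H]

def normalCone (C : Set H) (x : H) : Set H :=
  {y | x ∈ C ∧ ∀ z ∈ C, ⟪y, z - x⟫ ≤ 0}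

def tangentCone (Ω : Set H) (z : H) : Set H :=
  {w | ∃ t : ℕ → ℝ, ∃ wk : ℕ → H, (∀ k, 0 < t k) ∧ Tendsto t atTop (𝓝 0) ∧
    Tendsto wk atTop (𝓝 w) ∧ ∀ k, z + t k • wk k ∈ Ω}

def regularNormalCone (Ω : Set H) (z : H) : Set H :=
  {v | z ∈ Ω ∧ ∀ ε > 0, ∀ᶠ w in 𝓝[Ω \ {z}] z, ⟪v, w - z⟫ ≤ ε * ‖w - z‖}

def limitingNormalCone (Ω : Set H) (z : H) : Set H :=
  {v | ∃ zk : ℕ → H, ∃ vk : ℕ → H, (∀ k, vk k ∈ regularNormalCone Ω (zk k)) ∧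
    Tendsto zk atTop (𝓝 z) ∧ Tendsto vk atTop (𝓝 v)}

variable {n m : ℕ}

/-- The constraint set `Γ = {x | Φ(x) ∈ Q}`. -/
def Gamma (Φ : EuclideanSpace ℝ (Fin n) → Em m) : Set (EuclideanSpace ℝ (Fin n)) :=
  {x | Φ x ∈ Q m}

/-- Metric subregularity constraint qualification with modulus `κ`. -/
def MSCQmod (Φ : EuclideanSpace ℝ (Fin n) → Em m) (xb : EuclideanSpace ℝ (Fin n)) (κ : ℝ) : Prop :=
  ∃ U ∈ 𝓝 xb, ∀ x ∈ U, infDist x (Gamma Φ) ≤ κ * infDist (Φ x) (Q m)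

def MSCQ (Φ : EuclideanSpace ℝ (Fin n) → Em m) (xb : EuclideanSpace ℝ (Fin n)) : Prop :=
  ∃ κ > 0, MSCQmod Φ xb κ

/-- Lagrange multiplier set `Λ(x,x*)`. -/
def Lambda (Φ : EuclideanSpace ℝ (Fin n) → Em m) (x xs : EuclideanSpace ℝ (Fin n)) : Set (Em m) :=
  {lam | lam ∈ normalCone (Q m) (Φ x) ∧ ContinuousLinearMap.adjoint (fderiv ℝ Φ x) lam = xs}

/-- Critical cone `K(x,x*) = T_Γ(x) ∩ {x*}^⊥`. -/
def Kcone (Φ : EuclideanSpace ℝ (Fin n) → Em m) (x xs : EuclideanSpace ℝ (Fin n)) :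
    Set (EuclideanSpace ℝ (Fin n)) :=
  tangentCone (Gamma Φ) x ∩ {v | ⟪xs, v⟫ = 0}

/-- `x ↦ Φ̂(x) = (−Φ₀(x), Φ_r(x))`. -/
def hatFun (Φ : EuclideanSpace ℝ (Fin n) → Em m) (x : EuclideanSpace ℝ (Fin n)) : Em m :=
  mk2 (-(Φ x).ofLp.1) (Φ x).ofLp.2

/-- Hessian of `x ↦ ⟨λ, Φ(x)⟩` at `x`, as a linear map (derivative of the gradient). -/
def hessLam (Φ : EuclideanSpace ℝ (Fin n) → Em m) (x : EuclideanSpace ℝ (Fin n)) (lam : Em m) :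
    EuclideanSpace ℝ (Fin n) →L[ℝ] EuclideanSpace ℝ (Fin n) :=
  fderiv ℝ (fun y => ContinuousLinearMap.adjoint (fderiv ℝ Φ y) lam) x

/-- The curvature term `H(x;λ)`. -/

def Hmap (Φ : EuclideanSpace ℝ (Fin n) → Em m) (x : EuclideanSpace ℝ (Fin n)) (lam : Em m) :
    EuclideanSpace ℝ (Fin n) →L[ℝ] EuclideanSpace ℝ (Fin n) :=
  if Φ x ∈ frontier (Q m) \ {0} then
    (-(lam.ofLp.1 / (Φ x).ofLp.1)) •
      ((ContinuousLinearMap.adjoint (fderiv ℝ (hatFun Φ) x)).comp (fderiv ℝ Φ x))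
  else 0

/-- `∇²⟨λ,Φ⟩(x) + H(x;λ)`. -/
def Gmap (Φ : EuclideanSpace ℝ (Fin n) → Em m) (x : EuclideanSpace ℝ (Fin n)) (lam : Em m) :
    EuclideanSpace ℝ (Fin n) →L[ℝ] EuclideanSpace ℝ (Fin n) :=
  hessLam Φ x lam + Hmap Φ x lam

/-- `Λ(x,x*;v)`: minimizers of `λ ↦ −⟨v, (∇²⟨λ,Φ⟩(x)+H(x;λ))v⟩` over `Λ(x,x*)`. -/
def LambdaV (Φ : EuclideanSpace ℝ (Fin n) → Em m) (x xs v : EuclideanSpace ℝ (Fin n)) :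
    Set (Em m) :=
  {lam ∈ Lambda Φ x xs | ∀ mu ∈ Lambda Φ x xs,
    -⟪v, Gmap Φ x lam v⟫ ≤ -⟪v, Gmap Φ x mu v⟫}

/-- Graph of the limiting normal cone mapping `N_Γ`, inside `ℝ^n × ℝ^n` with the ℓ² norm. -/
def gphNGamma (Φ : EuclideanSpace ℝ (Fin n) → Em m) :
    Set (WithLp 2 (EuclideanSpace ℝ (Fin n) × EuclideanSpace ℝ (Fin n))) :=
  {p | p.ofLp.2 ∈ limitingNormalCone (Gamma Φ) p.ofLp.1}

/-- Second derivative `D²Φ(x)[v,v]`. -/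
def D2 (Φ : EuclideanSpace ℝ (Fin n) → Em m) (x v : EuclideanSpace ℝ (Fin n)) : Em m :=
  fderiv ℝ (fderiv ℝ Φ) x v v

end SOC

namespace SOC

/-- Graph of the normal cone mapping `N_Q`. -/
def gphNQ (m : ℕ) : Set (WithLp 2 (Em m × Em m)) :=
  {p | p.ofLp.2 ∈ normalCone (Q m) p.ofLp.1}

end SOC

namespace SOCAux
open SOC Filter Topology Metric Set

variable {m : ℕ}

lemma inner_formula (x y : Em m) : ⟪x, y⟫ = x.ofLp.1 * y.ofLp.1 + ⟪x.ofLp.2, y.ofLp.2⟫ := by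
  rw [WithLp.prod_inner_apply]; norm_num [RCLike.inner_apply]; ring

lemma mem_negQ_iff {s : Em m} : s ∈ -(Q m) ↔ ‖s.ofLp.2‖ ≤ -s.ofLp.1 := by
  rw [Set.mem_neg]
  show ‖(-s).ofLp.2‖ ≤ (-s).ofLp.1 ↔ _
  have h1 : (-s).ofLp.1 = -s.ofLp.1 := rfl
  have h2 : (-s).ofLp.2 = -s.ofLp.2 := rfl
  rw [h1, h2, norm_neg]

lemma negQ_mem_normalCone_zero {y : Em m} (hy : y ∈ -(Q m)) :
    y ∈ normalCone (Q m) (0 : Em m) := by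
  rw [mem_negQ_iff] at hy
  refine ⟨show ‖(0 : Em m).ofLp.2‖ ≤ (0 : Em m).ofLp.1 from by
    show ‖(0 : EuclideanSpace ℝ (Fin m))‖ ≤ (0:ℝ); simp, ?_⟩
  intro z hz
  have hz' : ‖z.ofLp.2‖ ≤ z.ofLp.1 := hz
  rw [sub_zero, inner_formula]
  have h3 : ⟪y.ofLp.2, z.ofLp.2⟫ ≤ ‖y.ofLp.2‖ * ‖z.ofLp.2‖ := real_inner_le_norm _ _
  nlinarith [norm_nonneg y.ofLp.2, norm_nonneg z.ofLp.2]

lemma normalCone_subset_negQ {x y : Em m} (hy : y ∈ normalCone (Q m) x) :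
    y ∈ -(Q m) := by
  obtain ⟨hx, h⟩ := hy
  have hx' : ‖x.ofLp.2‖ ≤ x.ofLp.1 := hx
  have key : ∀ q : Em m, q ∈ Q m → ⟪y, q⟫ ≤ 0 := by
    intro q hq
    have hq' : ‖q.ofLp.2‖ ≤ q.ofLp.1 := hq
    have hxq : x + q ∈ Q m := by
      show ‖(x + q).ofLp.2‖ ≤ (x + q).ofLp.1
      have e2 : (x + q).ofLp.2 = x.ofLp.2 + q.ofLp.2 := rfl
      have e1 : (x + q).ofLp.1 = x.ofLp.1 + q.ofLp.1 := rfl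
      rw [e1, e2]
      calc ‖x.ofLp.2 + q.ofLp.2‖ ≤ ‖x.ofLp.2‖ + ‖q.ofLp.2‖ := norm_add_le _ _
        _ ≤ x.ofLp.1 + q.ofLp.1 := add_le_add hx' hq'
    have := h _ hxq
    rwa [add_sub_cancel_left] at this
  have h1 : y.ofLp.1 ≤ 0 := by
    have hmem : (mk2 (1:ℝ) (0 : EuclideanSpace ℝ (Fin m))) ∈ Q m := by
      show ‖(0 : EuclideanSpace ℝ (Fin m))‖ ≤ (1:ℝ); simp
    have := key _ hmem
    rw [inner_formula] at this
    have e1 : (mk2 (1:ℝ) (0 : EuclideanSpace ℝ (Fin m))).ofLp.1 = 1 := rfl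
    have e2 : (mk2 (1:ℝ) (0 : EuclideanSpace ℝ (Fin m))).ofLp.2 = 0 := rfl
    rw [e1, e2] at this
    simpa using this
  have hmem2 : (mk2 ‖y.ofLp.2‖ y.ofLp.2) ∈ Q m := by
    show ‖(mk2 ‖y.ofLp.2‖ y.ofLp.2).ofLp.2‖ ≤ (mk2 ‖y.ofLp.2‖ y.ofLp.2).ofLp.1
    exact le_refl _
  have h2 := key _ hmem2
  rw [inner_formula] at h2
  have e1 : (mk2 ‖y.ofLp.2‖ y.ofLp.2).ofLp.1 = ‖y.ofLp.2‖ := rfl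
  have e2 : (mk2 ‖y.ofLp.2‖ y.ofLp.2).ofLp.2 = y.ofLp.2 := rfl
  rw [e1, e2] at h2
  rw [mem_negQ_iff]
  rcases eq_or_lt_of_le (norm_nonneg y.ofLp.2) with h0 | h0
  · rw [← h0]; linarith
  · have hs : ⟪y.ofLp.2, y.ofLp.2⟫ = ‖y.ofLp.2‖ * ‖y.ofLp.2‖ := real_inner_self_eq_norm_mul_norm _
    nlinarith

lemma negQ_segment {a b : Em m} (ha : a ∈ -(Q m)) (hb : b ∈ -(Q m)) {t : ℝ}
    (ht0 : 0 ≤ t) (ht1 : t ≤ 1) : a + t • (b - a) ∈ -(Q m) := by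
  rw [mem_negQ_iff] at ha hb ⊢
  have e2 : (a + t • (b - a)).ofLp.2 = a.ofLp.2 + t • (b.ofLp.2 - a.ofLp.2) := rfl
  have e1 : (a + t • (b - a)).ofLp.1 = a.ofLp.1 + t * (b.ofLp.1 - a.ofLp.1) := rfl
  rw [e1, e2]
  have hrw : a.ofLp.2 + t • (b.ofLp.2 - a.ofLp.2) = (1 - t) • a.ofLp.2 + t • b.ofLp.2 := by module
  rw [hrw]
  have hn := norm_add_le ((1 - t) • a.ofLp.2) (t • b.ofLp.2)
  rw [norm_smul, norm_smul, Real.norm_eq_abs, Real.norm_eq_abs,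
    abs_of_nonneg (by linarith), abs_of_nonneg ht0] at hn
  nlinarith [norm_nonneg a.ofLp.2, norm_nonneg b.ofLp.2,
    mul_le_mul_of_nonneg_left hb ht0,
    mul_le_mul_of_nonneg_left ha (by linarith : (0:ℝ) ≤ 1 - t)]

end SOCAux


open SOC SOCAux in
theorem multiplier_uniqueness_and_error_bound_iff_dual_qualification
    {n m : ℕ} (Φ : EuclideanSpace ℝ (Fin n) → Em m) (hΦ : ContDiff ℝ 2 Φ)
    (xb : EuclideanSpace ℝ (Fin n)) (hxb : Φ xb = 0)
    (xs : EuclideanSpace ℝ (Fin n))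
    (Λ : Set (Em m))
    (hΛ : Λ = {lam | lam ∈ -(Q m) ∧ ContinuousLinearMap.adjoint (fderiv ℝ Φ xb) lam = xs})
    (lamb : Em m) (hlamb : lamb ∈ Λ) :
    (Λ = {lamb} ∧ ∃ ℓ > (0 : ℝ), ∀ lam ∈ -(Q m),
        Metric.infDist lam Λ ≤ ℓ * ‖ContinuousLinearMap.adjoint (fderiv ℝ Φ xb) lam - xs‖)
    ↔
    ({w : Em m | mk2 (0 : Em m) w ∈ tangentCone (gphNQ m) (mk2 (0 : Em m) lamb)} ∩
      {w : Em m | ContinuousLinearMap.adjoint (fderiv ℝ Φ xb) w = 0} = {0}) := by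
  set A := ContinuousLinearMap.adjoint (fderiv ℝ Φ xb) with hA
  have hlamb' : lamb ∈ -(Q m) ∧ A lamb = xs := by
    have := hlamb; rw [hΛ] at this; exact this
  obtain ⟨hlambQ, hAl⟩ := hlamb'
  have cont2 : Continuous (fun p : WithLp 2 (Em m × Em m) => p.ofLp.2) :=
    continuous_snd.comp (WithLp.prodContinuousLinearEquiv 2 ℝ (Em m) (Em m)).continuous
  have contmk : Continuous (fun y : Em m => mk2 (0 : Em m) y) :=
    (WithLp.prodContinuousLinearEquiv 2 ℝ (Em m) (Em m)).symm.continuous.comp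
      (continuous_const.prodMk continuous_id)
  have htnat : Filter.Tendsto (fun k : ℕ => 1 / ((k : ℝ) + 1)) Filter.atTop (nhds 0) :=
    tendsto_one_div_add_atTop_nhds_zero_nat
  constructor
  · rintro ⟨hU, ℓ, hℓ, hEB⟩
    ext w
    simp only [Set.mem_inter_iff, Set.mem_setOf_eq, Set.mem_singleton_iff]
    constructor
    · rintro ⟨⟨t, u, ht, ht0, hu, hmem⟩, hker⟩
      have hnc : ∀ k, (mk2 (0 : Em m) lamb + t k • u k).ofLp.2 ∈
          normalCone (Q m) ((mk2 (0 : Em m) lamb + t k • u k).ofLp.1) := hmem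
      have hQ : ∀ k, lamb + t k • (u k).ofLp.2 ∈ -(Q m) := by
        intro k
        have := normalCone_subset_negQ (hnc k)
        exact this
      have hEBk : ∀ k, ‖(u k).ofLp.2‖ ≤ ℓ * ‖A ((u k).ofLp.2)‖ := by
        intro k
        have h1 := hEB _ (hQ k)
        rw [hU, Metric.infDist_singleton, dist_eq_norm] at h1
        have e3 : (lamb + t k • (u k).ofLp.2) - lamb = t k • (u k).ofLp.2 := add_sub_cancel_left _ _
        have e4 : A (lamb + t k • (u k).ofLp.2) - xs = t k • A ((u k).ofLp.2) := by
          rw [map_add, map_smul, hAl]; abel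
        rw [e3, e4, norm_smul, norm_smul, Real.norm_eq_abs, abs_of_pos (ht k)] at h1
        have h2 : t k * ‖(u k).ofLp.2‖ ≤ t k * (ℓ * ‖A ((u k).ofLp.2)‖) := by
          calc t k * ‖(u k).ofLp.2‖ ≤ ℓ * (t k * ‖A ((u k).ofLp.2)‖) := h1
            _ = t k * (ℓ * ‖A ((u k).ofLp.2)‖) := by ring
        exact le_of_mul_le_mul_left h2 (ht k)
      have hsnd : Filter.Tendsto (fun k => (u k).ofLp.2) Filter.atTop (nhds w) := by
        have : Filter.Tendsto (fun k => (u k).ofLp.2) Filter.atTop (nhds ((mk2 (0 : Em m) w).ofLp.2)) :=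
          (cont2.tendsto _).comp hu
        exact this
      have hlim1 : Filter.Tendsto (fun k => ‖(u k).ofLp.2‖) Filter.atTop (nhds ‖w‖) := hsnd.norm
      have hlim2 : Filter.Tendsto (fun k => ℓ * ‖A ((u k).ofLp.2)‖) Filter.atTop
          (nhds (ℓ * ‖A w‖)) :=
        (((A.continuous.tendsto w).comp hsnd).norm).const_mul ℓ
      have hle : ‖w‖ ≤ ℓ * ‖A w‖ := le_of_tendsto_of_tendsto' hlim1 hlim2 hEBk
      rw [hker] at hle
      simp only [norm_zero, mul_zero] at hle
      exact norm_le_zero_iff.mp hle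
    · rintro rfl
      refine ⟨⟨fun k : ℕ => 1 / ((k : ℝ) + 1), fun _ => 0, fun k => by positivity, htnat,
        ?_, ?_⟩, map_zero A⟩
      · have h00 : (mk2 (0 : Em m) (0 : Em m)) = 0 := rfl
        rw [h00]; exact tendsto_const_nhds
      · intro k
        show (mk2 (0 : Em m) lamb + (1 / ((k : ℝ) + 1)) • (0 : WithLp 2 (Em m × Em m))).ofLp.2 ∈
          normalCone (Q m) ((mk2 (0 : Em m) lamb + (1 / ((k : ℝ) + 1)) • (0 : WithLp 2 (Em m × Em m))).ofLp.1)
        have e1 : (mk2 (0 : Em m) lamb + (1 / ((k : ℝ) + 1)) • (0 : WithLp 2 (Em m × Em m))).ofLp.1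
            = 0 := by
          show (0 : Em m) + (1 / ((k : ℝ) + 1)) • (0 : Em m) = 0
          simp
        have e2 : (mk2 (0 : Em m) lamb + (1 / ((k : ℝ) + 1)) • (0 : WithLp 2 (Em m × Em m))).ofLp.2
            = lamb := by
          show lamb + (1 / ((k : ℝ) + 1)) • (0 : Em m) = lamb
          simp
        rw [e1, e2]
        exact negQ_mem_normalCone_zero hlambQ
  · intro hS
    have htang : ∀ (s : ℕ → ℝ) (v : ℕ → Em m) (vl : Em m),
        (∀ k, 0 < s k) → Filter.Tendsto s Filter.atTop (nhds 0) →
        Filter.Tendsto v Filter.atTop (nhds vl) →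
        (∀ k, lamb + s k • v k ∈ -(Q m)) → A vl = 0 → vl = 0 := by
      intro s v vl h1 h2 h3 h4 h5
      have hmemS : vl ∈ ({w : Em m | mk2 (0 : Em m) w ∈ tangentCone (gphNQ m)
          (mk2 (0 : Em m) lamb)} ∩ {w : Em m | A w = 0}) := by
        refine ⟨⟨s, fun k => mk2 (0 : Em m) (v k), h1, h2,
          (contmk.tendsto vl).comp h3, ?_⟩, h5⟩
        intro k
        show (mk2 (0 : Em m) lamb + s k • mk2 (0 : Em m) (v k)).ofLp.2 ∈
          normalCone (Q m) ((mk2 (0 : Em m) lamb + s k • mk2 (0 : Em m) (v k)).ofLp.1)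
        have e1 : (mk2 (0 : Em m) lamb + s k • mk2 (0 : Em m) (v k)).ofLp.1 = 0 := by
          show (0 : Em m) + s k • (0 : Em m) = 0; simp
        have e2 : (mk2 (0 : Em m) lamb + s k • mk2 (0 : Em m) (v k)).ofLp.2
            = lamb + s k • v k := rfl
        rw [e1, e2]
        exact negQ_mem_normalCone_zero (h4 k)
      rw [hS] at hmemS
      exact hmemS
    have hU : Λ = {lamb} := by
      apply Set.eq_singleton_iff_unique_mem.mpr
      refine ⟨hlamb, ?_⟩
      intro μ hμ
      have hμ' : μ ∈ -(Q m) ∧ A μ = xs := by rw [hΛ] at hμ; exact hμ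
      obtain ⟨hμQ, hμA⟩ := hμ'
      have := htang (fun k : ℕ => 1 / ((k : ℝ) + 1)) (fun _ => μ - lamb) (μ - lamb)
        (fun k => by positivity) htnat tendsto_const_nhds
        (fun k => negQ_segment hlambQ hμQ (by positivity)
          (by rw [div_le_one (by positivity)]; linarith [Nat.cast_nonneg (α := ℝ) k]))
        (by rw [map_sub, hμA, hAl, sub_self])
      have := sub_eq_zero.mp this
      exact this
    refine ⟨hU, ?_⟩
    by_contra hEB
    push_neg at hEB
    choose lam hlamQ hlt using fun k : ℕ => hEB ((k : ℝ) + 1) (by positivity)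
    simp only [hU, Metric.infDist_singleton, dist_eq_norm] at hlt
    set t : ℕ → ℝ := fun k => ‖lam k - lamb‖ with htdef
    have ht : ∀ k, 0 < t k := fun k => lt_of_le_of_lt (by positivity) (hlt k)
    set w : ℕ → Em m := fun k => (t k)⁻¹ • (lam k - lamb) with hwdef
    have hw1 : ∀ k, ‖w k‖ = 1 := by
      intro k
      rw [hwdef]
      simp only [norm_smul, norm_inv, Real.norm_eq_abs, abs_of_pos (ht k)]
      exact inv_mul_cancel₀ (ht k).ne'
    set s : ℕ → ℝ := fun k => min (t k) (1 / ((k : ℝ) + 1)) with hsdef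
    have hs0 : ∀ k, 0 < s k := fun k => lt_min (ht k) (by positivity)
    have hstend : Filter.Tendsto s Filter.atTop (nhds 0) :=
      squeeze_zero (fun k => (hs0 k).le) (fun k => min_le_right _ _) htnat
    have hmem : ∀ k, lamb + s k • w k ∈ -(Q m) := by
      intro k
      have hsw : s k • w k = (s k / t k) • (lam k - lamb) := by
        rw [hwdef]; rw [smul_smul, div_eq_mul_inv]
      rw [hsw]
      exact negQ_segment hlambQ (hlamQ k) (le_of_lt (div_pos (hs0 k) (ht k)))
        ((div_le_one (ht k)).mpr (min_le_left _ _))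
    obtain ⟨wl, hwlmem, φ, hφ, hconv⟩ :=
      (isCompact_sphere (0 : Em m) 1).tendsto_subseq
        (fun k => mem_sphere_zero_iff_norm.mpr (hw1 k))
    have hAwk : ∀ k, ‖A (w k)‖ ≤ 1 / ((k : ℝ) + 1) := by
      intro k
      have e : A (w k) = (t k)⁻¹ • (A (lam k) - xs) := by
        rw [hwdef, map_smul, map_sub, hAl]
      rw [e, norm_smul, norm_inv, Real.norm_eq_abs, abs_of_pos (ht k)]
      rw [inv_mul_le_iff₀ (ht k), mul_one_div, le_div_iff₀ (by positivity : (0:ℝ) < (k : ℝ) + 1)]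
      linarith [(hlt k).le, mul_comm (‖A (lam k) - xs‖) ((k : ℝ) + 1)]
    have hAlim : Filter.Tendsto (fun j => A (w (φ j))) Filter.atTop (nhds (A wl)) :=
      (A.continuous.tendsto _).comp hconv
    have hAzero : Filter.Tendsto (fun j => A (w (φ j))) Filter.atTop (nhds 0) := by
      apply squeeze_zero_norm (fun j => ?_) htnat
      calc ‖A (w (φ j))‖ ≤ 1 / ((φ j : ℝ) + 1) := hAwk (φ j)
        _ ≤ 1 / ((j : ℝ) + 1) := by
          apply one_div_le_one_div_of_le (by positivity)
          have hj : (j : ℝ) ≤ (φ j : ℝ) := Nat.cast_le.mpr hφ.le_apply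
          linarith
    have hAwl : A wl = 0 := tendsto_nhds_unique hAlim hAzero
    have hwl0 : wl = 0 :=
      htang (fun j => s (φ j)) (fun j => w (φ j)) wl (fun j => hs0 _)
        (hstend.comp hφ.tendsto_atTop) hconv (fun j => hmem _) hAwl
    have : (1 : ℝ) = 0 := by
      have := mem_sphere_zero_iff_norm.mp hwlmem
      rw [hwl0, norm_zero] at this
      exact this.symm
    exact one_ne_zero this
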